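/- Let G = A₀^{(I)} ⋊_σ Γ be the coinduced group of Γ₀ ↷ A₀, where A₀ is an icc group with trivial amenable radical and Stab_Γ(I) = 1. Then G has trivial amenable radical, i.e. G has no nontrivial amenable normal subgroup. -/

import Mathlib

/-- The restricted direct sum `⊕_{i ∈ I} A₀`. -/
def finSupp (I A₀ : Type*) [Group A₀] : Subgroup (I → A₀) where
  carrier := {x | (Function.mulSupport x).Finite}
  one_mem' := by
    have : Function.mulSupport (1 : I → A₀) = ∅ := Function.mulSupport_one
    simp [Set.mem_setOf_eq, this]
  mul_mem' := by
    intro x y hx hy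
    exact (Set.Finite.union hx hy).subset (Function.mulSupport_mul x y)
  inv_mem' := by
    intro x hx
    simpa [Function.mulSupport_inv] using hx

/-- A (discrete) group is amenable if it carries a left-invariant, finitely additive
probability measure defined on all subsets. -/
def IsAmenable (G : Type*) [Group G] : Prop :=
  ∃ μ : Set G → ℝ,
    (∀ s, 0 ≤ μ s) ∧ μ Set.univ = 1 ∧
    (∀ s t : Set G, Disjoint s t → μ (s ∪ t) = μ s + μ t) ∧
    (∀ (g : G) (s : Set G), μ ((g * ·) '' s) = μ s)

/-- A group has trivial amenable radical if it has no nontrivial amenable normal subgroup. -/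
def HasTrivialAmenableRadical (G : Type*) [Group G] : Prop :=
  ∀ D : Subgroup G, D.Normal → IsAmenable D → D = ⊥

/-- Amenability passes to subgroups (via an injective homomorphism), using a
transversal of right cosets of the image. -/
theorem isAmenable_of_injective {H G : Type*} [Group H] [Group G]
    (f : H →* G) (hf : Function.Injective f) (hG : IsAmenable G) : IsAmenable H := by
  classical
  obtain ⟨μ, hpos, huniv, hadd, hinv⟩ := hG
  set S : Subgroup G := f.range with hS
  let sd : Setoid G :=
    ⟨fun a b => a * b⁻¹ ∈ S, by
      refine ⟨fun a => by simpa using S.one_mem, fun {a b} h => ?_, fun {a b c} h1 h2 => ?_⟩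
      · have := S.inv_mem h
        simpa using this
      · have := S.mul_mem h1 h2
        simpa [mul_assoc] using this⟩
  let rep : G → G := fun g => (Quotient.mk sd g).out
  have hrel : ∀ g, rep g * g⁻¹ ∈ S := fun g => Quotient.mk_out (s := sd) g
  have hconst : ∀ g g', g * g'⁻¹ ∈ S → rep g = rep g' := fun g g' h =>
    congrArg Quotient.out (Quotient.sound (s := sd) h)
  have hex : ∀ g : G, ∃ h : H, g = f h * rep g := by
    intro g
    have h1 : g * (rep g)⁻¹ ∈ S := by
      have := S.inv_mem (hrel g); simpa using this
    obtain ⟨h, hh⟩ := h1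
    refine ⟨h, ?_⟩
    rw [hh]; group
  have huniq : ∀ (g : G) (h₁ h₂ : H), g = f h₁ * rep g → g = f h₂ * rep g → h₁ = h₂ := by
    intro g h₁ h₂ e1 e2
    apply hf
    exact mul_right_cancel (by rw [← e1, ← e2])
  let X : Set H → Set G := fun s => {g | ∃ h ∈ s, g = f h * rep g}
  refine ⟨fun s => μ (X s), fun s => hpos _, ?_, ?_, ?_⟩
  · have hXu : X Set.univ = Set.univ := by
      ext g
      simp only [X, Set.mem_setOf_eq, Set.mem_univ, iff_true]
      obtain ⟨h, hh⟩ := hex g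
      exact ⟨h, trivial, hh⟩
    show μ (X Set.univ) = 1
    rw [hXu, huniv]
  · intro s t hst
    have hX : X (s ∪ t) = X s ∪ X t := by
      ext g
      simp only [X, Set.mem_setOf_eq, Set.mem_union]
      constructor
      · rintro ⟨h, hh | hh, e⟩
        exacts [Or.inl ⟨h, hh, e⟩, Or.inr ⟨h, hh, e⟩]
      · rintro (⟨h, hh, e⟩ | ⟨h, hh, e⟩)
        exacts [⟨h, Or.inl hh, e⟩, ⟨h, Or.inr hh, e⟩]
    have hdisj : Disjoint (X s) (X t) := by
      rw [Set.disjoint_left]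
      rintro g ⟨h₁, hh₁, e₁⟩ ⟨h₂, hh₂, e₂⟩
      have := huniq g h₁ h₂ e₁ e₂
      exact Set.disjoint_left.mp hst hh₁ (this ▸ hh₂)
    show μ (X (s ∪ t)) = μ (X s) + μ (X t)
    rw [hX, hadd _ _ hdisj]
  · intro h₀ s
    have hXim : X ((h₀ * ·) '' s) = (f h₀ * ·) '' (X s) := by
      ext g
      simp only [X, Set.mem_setOf_eq, Set.mem_image]
      constructor
      · rintro ⟨h', ⟨h, hh, rfl⟩, e⟩
        refine ⟨(f h₀)⁻¹ * g, ⟨h, hh, ?_⟩, by group⟩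
        have hrg : rep ((f h₀)⁻¹ * g) = rep g := by
          apply hconst
          refine ⟨h₀⁻¹, ?_⟩
          rw [map_inv]; group
        rw [hrg, inv_mul_eq_iff_eq_mul, ← mul_assoc, ← map_mul]
        exact e
      · rintro ⟨g', ⟨h, hh, e⟩, rfl⟩
        have hrg : rep (f h₀ * g') = rep g' := by
          apply hconst
          exact ⟨h₀, by group⟩
        exact ⟨h₀ * h, ⟨h, hh, rfl⟩, by rw [hrg, map_mul, mul_assoc, ← e]⟩
    show μ (X ((h₀ * ·) '' s)) = μ (X s)
    rw [hXim, hinv]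

/-- Amenability passes to quotients (images of surjective homomorphisms). -/
theorem isAmenable_of_surjective {G H : Type*} [Group G] [Group H] (f : G →* H)
    (hf : Function.Surjective f) (hG : IsAmenable G) : IsAmenable H := by
  obtain ⟨μ, hpos, huniv, hadd, hinv⟩ := hG
  refine ⟨fun s => μ (f ⁻¹' s), fun s => hpos _, by simpa using huniv, ?_, ?_⟩
  · intro s t hst
    show μ (⇑f ⁻¹' (s ∪ t)) = μ (⇑f ⁻¹' s) + μ (⇑f ⁻¹' t)
    rw [Set.preimage_union, hadd]
    exact hst.preimage f
  · intro h s
    obtain ⟨g, rfl⟩ := hf h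
    have hpre : f ⁻¹' ((f g * ·) '' s) = (g * ·) '' (f ⁻¹' s) := by
      ext x
      simp only [Set.mem_preimage, Set.mem_image]
      constructor
      · rintro ⟨y, hy, e⟩
        refine ⟨g⁻¹ * x, ?_, by group⟩
        have : f (g⁻¹ * x) = y := by
          rw [map_mul, map_inv, ← e]; group
        show f (g⁻¹ * x) ∈ s
        rwa [this]
      · rintro ⟨y, hy, rfl⟩
        exact ⟨f y, hy, by rw [map_mul]⟩
    show μ (⇑f ⁻¹' ((f g * ·) '' s)) = μ (⇑f ⁻¹' s)
    rw [hpre, hinv]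

/-- Let `G = A₀^{(I)} ⋊_σ Γ` be the coinduced group of `Γ₀ ↷ A₀` (abstractly: a semidirect
product for an action `σ` of `Γ` on the restricted direct sum over `I` which permutes the
coordinates with base automorphisms), where `A₀` is an icc group with trivial amenable
radical and `Γ ↷ I` is faithful.  Then `G` has trivial amenable radical. -/
theorem stmt8 {Γ A₀ I : Type*} [Group Γ] [Group A₀] [Nontrivial A₀] [MulAction Γ I]
    (hicc : ∀ a : A₀, a ≠ 1 → {b : A₀ | ∃ k : A₀, k * a * k⁻¹ = b}.Infinite)
    (hrad : HasTrivialAmenableRadical A₀)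
    (hfaith : ∀ g : Γ, (∀ i : I, g • i = i) → g = 1)
    (σ : Γ →* MulAut (finSupp I A₀))
    (hσ : ∀ (g : Γ) (i : I), ∃ τ : MulAut A₀, ∀ x : finSupp I A₀,
      ((σ g x : I → A₀)) (g • i) = τ ((x : I → A₀) i)) :
    HasTrivialAmenableRadical (finSupp I A₀ ⋊[σ] Γ) := by
  classical
  intro D hD hDam
  by_contra hne
  obtain ⟨d, hdD, hd1⟩ : ∃ d ∈ D, d ≠ 1 := by
    rcases D.bot_or_exists_ne_one with h | h
    · exact absurd h hne
    · exact h
  -- Step 1: find a nontrivial element of D lying in the normal subgroup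
  have key : ∃ a : finSupp I A₀, a ≠ 1 ∧ SemidirectProduct.inl a ∈ D := by
    by_cases hg : d.right = 1
    · have hdl : SemidirectProduct.inl d.left = d := by
        ext
        · simp
        · simp [hg]
      refine ⟨d.left, fun h => hd1 ?_, by rwa [hdl]⟩
      rw [← hdl, h, map_one]
    · obtain ⟨i, hi⟩ : ∃ i : I, d.right • i ≠ i := by
        by_contra h; push_neg at h; exact hg (hfaith _ h)
      obtain ⟨b, hb⟩ := exists_ne (1 : A₀)
      have hmem : Pi.mulSingle i b ∈ finSupp I A₀ := by
        apply Set.Finite.subset (Set.finite_singleton i)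
        intro j hj
        simp only [Set.mem_singleton_iff]
        by_contra hji
        exact Function.mem_mulSupport.mp hj (Pi.mulSingle_eq_of_ne (M := fun _ : I => A₀) hji b)
      set n : finSupp I A₀ := ⟨Pi.mulSingle i b, hmem⟩ with hn
      set c : finSupp I A₀ ⋊[σ] Γ :=
        SemidirectProduct.inl n * d * (SemidirectProduct.inl n)⁻¹ * d⁻¹ with hc
      have hcD : c ∈ D := by
        have h1 : SemidirectProduct.inl n * d * (SemidirectProduct.inl n)⁻¹ ∈ D :=
          hD.conj_mem d hdD _
        exact D.mul_mem h1 (D.inv_mem hdD)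
      have hcright : c.right = 1 := by
        simp [hc]
      have hclv : c.left = n * d.left * (σ d.right n⁻¹) * d.left⁻¹ := by
        have h1 : σ d.right ((σ d.right⁻¹) d.left⁻¹) = d.left⁻¹ := by
          have : σ d.right * σ d.right⁻¹ = 1 := by
            rw [← map_mul, mul_inv_cancel, map_one]
          calc σ d.right ((σ d.right⁻¹) d.left⁻¹)
              = (σ d.right * σ d.right⁻¹) d.left⁻¹ := rfl
            _ = d.left⁻¹ := by rw [this]; rfl
        simp only [hc, SemidirectProduct.mul_left, SemidirectProduct.mul_right,
          SemidirectProduct.inv_left, SemidirectProduct.inv_right,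
          SemidirectProduct.left_inl, SemidirectProduct.right_inl, map_one, inv_one,
          one_mul, mul_one, MulAut.one_apply]
        rw [h1]
      obtain ⟨τ, hτ⟩ := hσ d.right i
      have hval : ((c.left : I → A₀)) (d.right • i) =
          ((d.left : I → A₀) (d.right • i)) * τ b⁻¹ *
            ((d.left : I → A₀) (d.right • i))⁻¹ := by
        have h2 : ((σ d.right n⁻¹ : finSupp I A₀) : I → A₀) (d.right • i) = τ b⁻¹ := by
          rw [hτ n⁻¹]
          have : ((n⁻¹ : finSupp I A₀) : I → A₀) i = b⁻¹ := by
            simp [hn]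
          rw [this]
        rw [hclv]
        push_cast
        simp only [Pi.mul_apply, Pi.inv_apply]
        rw [h2, show ((n : I → A₀)) (d.right • i) = 1 from
          Pi.mulSingle_eq_of_ne (M := fun _ : I => A₀) hi b, one_mul]
      have hcleft : ((c.left : I → A₀)) (d.right • i) ≠ 1 := by
        rw [hval]
        intro h
        rw [mul_inv_eq_iff_eq_mul, one_mul, mul_eq_left] at h
        have hbinv : b⁻¹ = (1 : A₀) := τ.injective (by rw [map_one]; exact h)
        exact hb (inv_eq_one.mp hbinv)
      refine ⟨c.left, fun h => hcleft (by rw [h]; rfl), ?_⟩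
      have hcl : SemidirectProduct.inl c.left = c := by
        ext
        · simp
        · simp [hcright]
      rwa [hcl]
  -- Step 2: project to a coordinate and contradict the amenable radical of A₀
  obtain ⟨a, ha1, haD⟩ := key
  obtain ⟨i, hai⟩ : ∃ i, (a : I → A₀) i ≠ 1 := by
    by_contra h; push_neg at h
    exact ha1 (Subtype.ext (funext fun i => h i))
  set evi : finSupp I A₀ →* A₀ :=
    (Pi.evalMonoidHom (fun _ : I => A₀) i).comp (finSupp I A₀).subtype with hevi
  set D' : Subgroup (finSupp I A₀) := D.comap (SemidirectProduct.inl (φ := σ)) with hD'def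
  have hD' : D'.Normal := hD.comap _
  have hD'am : IsAmenable D' := by
    refine isAmenable_of_injective ((SemidirectProduct.inl (φ := σ)).subgroupComap D) ?_ hDam
    intro x y h
    have := congrArg Subtype.val h
    exact Subtype.ext (SemidirectProduct.inl_injective this)
  set M : Subgroup A₀ := D'.map evi with hMdef
  have hMam : IsAmenable M :=
    isAmenable_of_surjective (evi.subgroupMap D') (MonoidHom.subgroupMap_surjective evi D') hD'am
  have hMnorm : M.Normal := by
    constructor
    intro x hx k
    obtain ⟨y, hy, rfl⟩ := hx
    have hks : Pi.mulSingle i k ∈ finSupp I A₀ := by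
      apply Set.Finite.subset (Set.finite_singleton i)
      intro j hj
      simp only [Set.mem_singleton_iff]
      by_contra hji
      exact Function.mem_mulSupport.mp hj (Pi.mulSingle_eq_of_ne (M := fun _ : I => A₀) hji k)
    set u : finSupp I A₀ := ⟨Pi.mulSingle i k, hks⟩ with hu
    have hconj : u * y * u⁻¹ ∈ D' := hD'.conj_mem y hy u
    refine ⟨u * y * u⁻¹, hconj, ?_⟩
    simp only [hevi, MonoidHom.comp_apply, Subgroup.coe_subtype, Pi.evalMonoidHom_apply]
    push_cast
    simp [hu]
  have hMbot : M = ⊥ := hrad M hMnorm hMam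
  have haM : evi a ∈ M := ⟨a, haD, rfl⟩
  rw [hMbot] at haM
  apply hai
  simpa [hevi] using haM
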